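/- Let (C, C₋, C₊) be a Reedy category. Then every morphism (α, θ) : ([m], X) → ([n], Y) of ∫N^{-,+}(C) factors uniquely as a morphism of Γ₋ followed by a morphism of Γ₊: there is a unique triple consisting of an object ([l], X'), a morphism (σ, id) : ([m], X) → ([l], X') in Γ₋, and a morphism (δ, θ') : ([l], X') → ([n], Y) in Γ₊ whose composite is (α, θ). -/

import Mathlib

namespace ReedyPaper

open CategoryTheory

universe v₂ u₂ v₁ u₁ v u

variable {C : Type u} [Category.{v} C]

def IsIdMor {x y : C} (f : x ⟶ y) : Prop := ∃ h : x = y, f = eqToHom h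

structure ReedyStruct (C : Type u) [Category.{v} C] where
  neg : MorphismProperty C
  pos : MorphismProperty C
  neg_id : ∀ x : C, neg (𝟙 x)
  pos_id : ∀ x : C, pos (𝟙 x)
  neg_comp : ∀ {x y z : C} (f : x ⟶ y) (g : y ⟶ z), neg f → neg g → neg (f ≫ g)
  pos_comp : ∀ {x y z : C} (f : x ⟶ y) (g : y ⟶ z), pos f → pos g → pos (f ≫ g)
  factor_existsUnique : ∀ {x y : C} (f : x ⟶ y),
    ∃! t : Σ z : C, (x ⟶ z) × (z ⟶ y), neg t.2.1 ∧ pos t.2.2 ∧ t.2.1 ≫ t.2.2 = f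
  wf : WellFounded (fun x y : C =>
    (∃ f : x ⟶ y, pos f ∧ ¬ IsIdMor f) ∨ (∃ f : y ⟶ x, neg f ∧ ¬ IsIdMor f))

structure ChainObj (C : Type u) [Category.{v} C] where
  n : ℕ
  X : Fin (n + 1) ⥤ C

structure ChainHom (P Q : ChainObj C) where
  α : Fin (P.n + 1) →o Fin (Q.n + 1)
  θ : ∀ i : Fin (P.n + 1), P.X.obj i ⟶ Q.X.obj (α i)
  natural : ∀ {i j : Fin (P.n + 1)} (h : i ≤ j),
    P.X.map (homOfLE h) ≫ θ j = θ i ≫ Q.X.map (homOfLE (α.monotone h))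

theorem ChainHom.ext' {P Q : ChainObj C} {f g : ChainHom P Q}
    (hα : f.α = g.α) (hθ : HEq f.θ g.θ) : f = g := by
  cases f; cases g; cases hα; cases hθ; rfl

def ChainHom.id (P : ChainObj C) : ChainHom P P where
  α := OrderHom.id
  θ i := 𝟙 _
  natural h := by
    show P.X.map (homOfLE h) ≫ 𝟙 _ = 𝟙 _ ≫ P.X.map (homOfLE h)
    simp

def ChainHom.comp {P Q S : ChainObj C} (f : ChainHom P Q) (g : ChainHom Q S) :
    ChainHom P S where
  α := g.α.comp f.α
  θ i := f.θ i ≫ g.θ (f.α i)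
  natural {i j} h := by
    show P.X.map (homOfLE h) ≫ (f.θ j ≫ g.θ (f.α j)) =
      (f.θ i ≫ g.θ (f.α i)) ≫ S.X.map (homOfLE (g.α.monotone (f.α.monotone h)))
    rw [← Category.assoc, f.natural h, Category.assoc, g.natural (f.α.monotone h),
      ← Category.assoc]

instance : Category (ChainObj C) where
  Hom := ChainHom
  id := ChainHom.id
  comp := ChainHom.comp
  id_comp f := ChainHom.ext' rfl (heq_of_eq (funext fun i => Category.id_comp _))
  comp_id f := ChainHom.ext' rfl (heq_of_eq (funext fun i => Category.comp_id _))
  assoc f g h := ChainHom.ext' rfl (heq_of_eq (funext fun i => Category.assoc _ _ _))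

/-- The partial order on the hom-sets of `∫N(C)` (and of `∫N^{-,+}(C)`):
`(α, θ) ≤ (α', θ')` iff `α ≤ α'` pointwise and `θ'ᵢ = Y(α(i) ≤ α'(i)) ∘ θᵢ` for all `i`. -/
def ChainHom.le {P Q : ChainObj C} (f g : ChainHom P Q) : Prop :=
  (∀ i, f.α i ≤ g.α i) ∧
    ∀ (i : Fin (P.n + 1)) (h : f.α i ≤ g.α i), g.θ i = f.θ i ≫ Q.X.map (homOfLE h)

theorem ChainHom.le_comp_right {P Q S : ChainObj C} {f f' : P ⟶ Q} (g : Q ⟶ S)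
    (h : ChainHom.le f f') : ChainHom.le (f ≫ g) (f' ≫ g) := by
  refine ⟨fun i => g.α.monotone (h.1 i), fun i hi => ?_⟩
  show f'.θ i ≫ g.θ (f'.α i) = (f.θ i ≫ g.θ (f.α i)) ≫ S.X.map (homOfLE hi)
  rw [h.2 i (h.1 i), Category.assoc, g.natural (h.1 i), ← Category.assoc]
  rfl

theorem ChainHom.le_comp_left {P Q S : ChainObj C} (f : P ⟶ Q) {g g' : Q ⟶ S}
    (h : ChainHom.le g g') : ChainHom.le (f ≫ g) (f ≫ g') := by
  refine ⟨fun i => h.1 (f.α i), fun i hi => ?_⟩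
  show f.θ i ≫ g'.θ (f.α i) = (f.θ i ≫ g.θ (f.α i)) ≫ S.X.map (homOfLE hi)
  rw [h.2 (f.α i) (h.1 (f.α i)), ← Category.assoc]
  rfl

/-- Objects of `∫N^{-,+}(C)`: chains all of whose morphisms lie in `C₋`. -/
structure NegObj (R : ReedyStruct C) where
  n : ℕ
  X : Fin (n + 1) ⥤ C
  negMap : ∀ {i j : Fin (n + 1)} (h : i ≤ j), R.neg (X.map (homOfLE h))

variable {R : ReedyStruct C}

/-- The underlying object of `∫N(C)`. -/
def NegObj.chain (P : NegObj R) : ChainObj C := ⟨P.n, P.X⟩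

/-- Morphisms of `∫N^{-,+}(C)`: morphisms of `∫N(C)` all of whose components lie in `C₊`. -/
def NegHomT (P Q : NegObj R) : Type v :=
  { f : P.chain ⟶ Q.chain // ∀ i, R.pos (f.θ i) }

def NegHomT.id (P : NegObj R) : NegHomT P P := ⟨𝟙 P.chain, fun _ => R.pos_id _⟩

def NegHomT.comp {P Q S : NegObj R} (f : NegHomT P Q) (g : NegHomT Q S) : NegHomT P S :=
  ⟨f.1 ≫ g.1, fun i => by
    show R.pos (f.1.θ i ≫ g.1.θ (f.1.α i))
    exact R.pos_comp _ _ (f.2 i) (g.2 _)⟩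

theorem NegHomT.id_comp {P Q : NegObj R} (f : NegHomT P Q) : (NegHomT.id P).comp f = f := by
  apply Subtype.ext
  show 𝟙 P.chain ≫ f.1 = f.1
  exact Category.id_comp f.1

theorem NegHomT.comp_id {P Q : NegObj R} (f : NegHomT P Q) : f.comp (NegHomT.id Q) = f := by
  apply Subtype.ext
  show f.1 ≫ 𝟙 Q.chain = f.1
  exact Category.comp_id f.1

theorem NegHomT.comp_assoc {P Q S T : NegObj R} (f : NegHomT P Q) (g : NegHomT Q S)
    (h : NegHomT S T) : (f.comp g).comp h = f.comp (g.comp h) := by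
  apply Subtype.ext
  show (f.1 ≫ g.1) ≫ h.1 = f.1 ≫ (g.1 ≫ h.1)
  exact Category.assoc f.1 g.1 h.1

/-- The category `∫N^{-,+}(C)`. -/
instance : Category (NegObj R) where
  Hom := NegHomT
  id := NegHomT.id
  comp := NegHomT.comp
  id_comp := NegHomT.id_comp
  comp_id := NegHomT.comp_id
  assoc := NegHomT.comp_assoc

/-- The order on the hom-sets of `∫N^{-,+}(C)`. -/
def NegHom.le {P Q : NegObj R} (f g : P ⟶ Q) : Prop := ChainHom.le f.1 g.1

/-- The equivalence relation `∼` on the hom-sets of `∫N^{-,+}(C)`: the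
symmetric-transitive closure of `≤`. -/
def NegHom.equiv {P Q : NegObj R} (f g : P ⟶ Q) : Prop :=
  Relation.EqvGen (fun a b : P ⟶ Q => NegHom.le a b) f g

theorem NegHom.le_comp_right {P Q S : NegObj R} {f f' : P ⟶ Q} (g : Q ⟶ S)
    (h : NegHom.le f f') : NegHom.le (f ≫ g) (f' ≫ g) :=
  ChainHom.le_comp_right g.1 h

theorem NegHom.le_comp_left {P Q S : NegObj R} (f : P ⟶ Q) {g g' : Q ⟶ S}
    (h : NegHom.le g g') : NegHom.le (f ≫ g) (f ≫ g') :=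
  ChainHom.le_comp_left f.1 h

/-- Identity-reflectingness of a chain. -/
def NegObj.IdRefl (P : NegObj R) : Prop :=
  ∀ {i j : Fin (P.n + 1)} (h : i ≤ j), IsIdMor (P.X.map (homOfLE h)) → i = j

/-- Objects of `∫N^{--,+}_+(C)`: identity-reflecting chains in `C₋`. -/
structure StrictObj (R : ReedyStruct C) where
  toNegObj : NegObj R
  idRefl : toNegObj.IdRefl

/-- Morphisms of `∫N^{--,+}_+(C)`: morphisms of `∫N^{-,+}(C)` with `α` injective. -/
def StrictHomT (P Q : StrictObj R) : Type v :=
  { f : P.toNegObj ⟶ Q.toNegObj // Function.Injective f.1.α }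

def StrictHomT.id (P : StrictObj R) : StrictHomT P P :=
  ⟨𝟙 P.toNegObj, fun _ _ h => h⟩

def StrictHomT.comp {P Q S : StrictObj R} (f : StrictHomT P Q) (g : StrictHomT Q S) :
    StrictHomT P S :=
  ⟨f.1 ≫ g.1, fun _ _ h => f.2 (g.2 h)⟩

/-- The category `∫N^{--,+}_+(C)`. -/
instance : Category (StrictObj R) where
  Hom := StrictHomT
  id := StrictHomT.id
  comp := StrictHomT.comp
  id_comp f := Subtype.ext (Category.id_comp f.1)
  comp_id f := Subtype.ext (Category.comp_id f.1)
  assoc f g h := Subtype.ext (Category.assoc f.1 g.1 h.1)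

/-- The order on the hom-sets of `∫N^{--,+}_+(C)`. -/
def StrictHom.le {P Q : StrictObj R} (f g : P ⟶ Q) : Prop := NegHom.le f.1 g.1

/-- The equivalence relation `∼` on the hom-sets of `∫N^{--,+}_+(C)`. -/
def StrictHom.equiv {P Q : StrictObj R} (f g : P ⟶ Q) : Prop :=
  Relation.EqvGen (fun a b : P ⟶ Q => StrictHom.le a b) f g

theorem StrictHom.le_comp_right {P Q S : StrictObj R} {f f' : P ⟶ Q} (g : Q ⟶ S)
    (h : StrictHom.le f f') : StrictHom.le (f ≫ g) (f' ≫ g) :=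
  NegHom.le_comp_right g.1 h

theorem StrictHom.le_comp_left {P Q S : StrictObj R} (f : P ⟶ Q) {g g' : Q ⟶ S}
    (h : StrictHom.le g g') : StrictHom.le (f ≫ g) (f ≫ g') :=
  NegHom.le_comp_left f.1 h

/-- Objects of `Down_*(C)`: the same as those of `∫N^{-,+}(C)`. -/
structure DownStar (R : ReedyStruct C) where
  obj : NegObj R

/-- The category `Down_*(C)`: hom-sets are the quotients of those of `∫N^{-,+}(C)`
by the symmetric-transitive closure of `≤`. -/
instance : Category (DownStar R) where
  Hom P Q := Quot (fun f g : P.obj ⟶ Q.obj => NegHom.le f g)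
  id P := Quot.mk _ (𝟙 P.obj)
  comp {P Q S} f g :=
    Quot.lift
      (fun f' => Quot.lift (fun g' => Quot.mk _ (f' ≫ g'))
        (fun _ _ hg => Quot.sound (NegHom.le_comp_left f' hg)) g)
      (fun f₁ f₂ hf => Quot.inductionOn g (fun g' =>
        Quot.sound (NegHom.le_comp_right g' hf))) f
  id_comp f := Quot.inductionOn f fun f' => congrArg (Quot.mk _) (Category.id_comp f')
  comp_id f := Quot.inductionOn f fun f' => congrArg (Quot.mk _) (Category.comp_id f')
  assoc f g h :=
    Quot.inductionOn f fun f' => Quot.inductionOn g fun g' => Quot.inductionOn h fun h' =>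
      congrArg (Quot.mk _) (Category.assoc f' g' h')

/-- Objects of `Down(C)`: the same as those of `∫N^{--,+}_+(C)`. -/
structure Down (R : ReedyStruct C) where
  obj : StrictObj R

/-- The category `Down(C)`: hom-sets are the quotients of those of `∫N^{--,+}_+(C)`
by the symmetric-transitive closure of `≤`. -/
instance : Category (Down R) where
  Hom P Q := Quot (fun f g : P.obj ⟶ Q.obj => StrictHom.le f g)
  id P := Quot.mk _ (𝟙 P.obj)
  comp {P Q S} f g :=
    Quot.lift
      (fun f' => Quot.lift (fun g' => Quot.mk _ (f' ≫ g'))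
        (fun _ _ hg => Quot.sound (StrictHom.le_comp_left f' hg)) g)
      (fun f₁ f₂ hf => Quot.inductionOn g (fun g' =>
        Quot.sound (StrictHom.le_comp_right g' hf))) f
  id_comp f := Quot.inductionOn f fun f' => congrArg (Quot.mk _) (Category.id_comp f')
  comp_id f := Quot.inductionOn f fun f' => congrArg (Quot.mk _) (Category.comp_id f')
  assoc f g h :=
    Quot.inductionOn f fun f' => Quot.inductionOn g fun g' => Quot.inductionOn h fun h' =>
      congrArg (Quot.mk _) (Category.assoc f' g' h')

/-- The quotient functor `∫N^{-,+}(C) → Down_*(C)`. -/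
def qStar (R : ReedyStruct C) : NegObj R ⥤ DownStar R where
  obj P := ⟨P⟩
  map f := Quot.mk _ f
  map_id _ := rfl
  map_comp _ _ := rfl

/-- The inclusion functor `Down(C) → Down_*(C)`. -/
def downInclusion (R : ReedyStruct C) : Down R ⥤ DownStar R where
  obj P := ⟨P.obj.toNegObj⟩
  map {P Q} f :=
    Quot.lift (fun f' : P.obj ⟶ Q.obj => Quot.mk _ f'.1) (fun _ _ h => Quot.sound h) f
  map_id _ := rfl
  map_comp {P Q S} f g := by
    induction f using Quot.ind
    induction g using Quot.ind
    rfl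

/-- The last-component functor `∫N(C) → C`. -/
def lastChain : ChainObj C ⥤ C where
  obj P := P.X.obj (Fin.last P.n)
  map {P Q} f := f.θ (Fin.last P.n) ≫ Q.X.map (homOfLE (Fin.le_last (f.α (Fin.last P.n))))
  map_id P := by
    show 𝟙 (P.X.obj (Fin.last P.n)) ≫ P.X.map (homOfLE (Fin.le_last (Fin.last P.n))) = 𝟙 _
    rw [Category.id_comp]
    exact P.X.map_id _
  map_comp {P Q S} f g := by
    show (f.θ (Fin.last P.n) ≫ g.θ (f.α (Fin.last P.n))) ≫
        S.X.map (homOfLE (Fin.le_last (g.α (f.α (Fin.last P.n))))) =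
      (f.θ (Fin.last P.n) ≫ Q.X.map (homOfLE (Fin.le_last (f.α (Fin.last P.n))))) ≫
        g.θ (Fin.last Q.n) ≫ S.X.map (homOfLE (Fin.le_last (g.α (Fin.last Q.n))))
    rw [Category.assoc, Category.assoc, ← Category.assoc (Q.X.map _),
      g.natural (Fin.le_last (f.α (Fin.last P.n))), Category.assoc, ← Functor.map_comp,
      homOfLE_comp]

theorem lastChain_eq_of_le {P Q : ChainObj C} {f g : P ⟶ Q} (h : ChainHom.le f g) :
    lastChain.map f = lastChain.map g := by
  show f.θ (Fin.last P.n) ≫ Q.X.map (homOfLE (Fin.le_last (f.α (Fin.last P.n)))) =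
    g.θ (Fin.last P.n) ≫ Q.X.map (homOfLE (Fin.le_last (g.α (Fin.last P.n))))
  rw [h.2 (Fin.last P.n) (h.1 (Fin.last P.n)), Category.assoc, ← Functor.map_comp,
    homOfLE_comp]

/-- The forgetful functor `∫N^{-,+}(C) → ∫N(C)`. -/
def negForget (R : ReedyStruct C) : NegObj R ⥤ ChainObj C where
  obj P := P.chain
  map f := f.1
  map_id _ := rfl
  map_comp _ _ := rfl

/-- The last-component functor `∫N^{-,+}(C) → C`. -/
def lastNeg (R : ReedyStruct C) : NegObj R ⥤ C := negForget R ⋙ lastChain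

/-- The forgetful functor `∫N^{--,+}_+(C) → ∫N^{-,+}(C)`. -/
def strictForget (R : ReedyStruct C) : StrictObj R ⥤ NegObj R where
  obj P := P.toNegObj
  map f := f.1
  map_id _ := rfl
  map_comp _ _ := rfl

/-- The last-component functor `∫N^{--,+}_+(C) → C`. -/
def lastStrict (R : ReedyStruct C) : StrictObj R ⥤ C := strictForget R ⋙ lastNeg R

/-- The last-component functor `Down_*(C) → C`. -/
def lastDownStar (R : ReedyStruct C) : DownStar R ⥤ C where
  obj P := (lastNeg R).obj P.obj
  map {P Q} f :=
    Quot.lift (fun f' : P.obj ⟶ Q.obj => (lastNeg R).map f')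
      (fun _ _ h => lastChain_eq_of_le h) f
  map_id P := (lastNeg R).map_id P.obj
  map_comp {P Q S} f g := by
    induction f using Quot.ind
    induction g using Quot.ind
    exact (lastNeg R).map_comp _ _

/-- The last-component functor `Down(C) → C`. -/
def lastDown (R : ReedyStruct C) : Down R ⥤ C where
  obj P := (lastStrict R).obj P.obj
  map {P Q} f :=
    Quot.lift (fun f' : P.obj ⟶ Q.obj => (lastStrict R).map f')
      (fun _ _ h => lastChain_eq_of_le h) f
  map_id P := (lastStrict R).map_id P.obj
  map_comp {P Q S} f g := by
    induction f using Quot.ind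
    induction g using Quot.ind
    exact (lastStrict R).map_comp _ _

/-- The wide subcategory `Γ₋` of `∫N^{-,+}(C)`: morphisms of the form
`(σ, id) : ([m], X ∘ σ) → ([n], X)` with `σ` surjective, i.e. morphisms whose simplicial
component is surjective and all of whose components are identities. -/
def GammaNeg (R : ReedyStruct C) {P Q : NegObj R} (f : P ⟶ Q) : Prop :=
  Function.Surjective f.1.α ∧ ∀ i, IsIdMor (f.1.θ i)

/-- The wide subcategory `Γ₊` of `∫N^{-,+}(C)`: morphisms `(δ, θ)` with `δ` injective. -/
def GammaPos (R : ReedyStruct C) {P Q : NegObj R} (f : P ⟶ Q) : Prop :=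
  Function.Injective f.1.α

/-- Whiskering (precomposition) with `lastF` is bijective on natural transformations
between functors out of `C`. -/
def WhiskerUnique {Γ : Type u₁} [Category.{v₁} Γ] (lastF : Γ ⥤ C) : Prop :=
  ∀ {D : Type u₂} [Category.{v₂} D] (F G : C ⥤ D)
    (ε : lastF ⋙ F ⟶ lastF ⋙ G), ∃! ε' : F ⟶ G, Functor.whiskerLeft lastF ε' = ε

/-- `lastF : Γ ⥤ C` is a weak 1-localization of `Γ` at the `last`-weak equivalences
(the morphisms sent by `lastF` to identities). -/
def IsWeakLocalizationAtLastWeq {Γ : Type u₁} [Category.{v₁} Γ] (lastF : Γ ⥤ C) : Prop :=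
  (∀ {P Q : Γ} (f : P ⟶ Q), IsIdMor (lastF.map f) → IsIso (lastF.map f)) ∧
  (∀ {E : Type u₂} [Category.{v₂} E] (G : Γ ⥤ E),
    (∀ {P Q : Γ} (f : P ⟶ Q), IsIdMor (lastF.map f) → IsIso (G.map f)) →
    ∃ H : C ⥤ E, Nonempty (lastF ⋙ H ≅ G)) ∧
  (∀ {E : Type u₂} [Category.{v₂} E] (H H' : C ⥤ E) (θ : lastF ⋙ H ≅ lastF ⋙ H'),
    ∃! θ' : H ≅ H', Functor.isoWhiskerLeft lastF θ' = θ)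


section Factorization

set_option maxHeartbeats 1000000

variable {R : ReedyStruct C}

theorem pos_eqToHom (R : ReedyStruct C) {x y : C} (h : x = y) : R.pos (eqToHom h) := by
  subst h; exact R.pos_id x

theorem map_homOfLE_congr {J : Type u₁} [Preorder J] (F : J ⥤ C) {a b a' b' : J}
    (h : a ≤ b) (h' : a' ≤ b') (ha : a = a') (hb : b = b') :
    F.map (homOfLE h) = eqToHom (congrArg F.obj ha) ≫ F.map (homOfLE h') ≫
      eqToHom (congrArg F.obj hb).symm := by
  subst ha; subst hb
  rw [Subsingleton.elim (homOfLE h) (homOfLE h')]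
  simp

theorem map_homOfLE_self {J : Type u₁} [Preorder J] (F : J ⥤ C) {a b : J}
    (h : a ≤ b) (hab : a = b) : F.map (homOfLE h) = eqToHom (congrArg F.obj hab) := by
  subst hab
  rw [Subsingleton.elim (homOfLE h) (𝟙 a)]
  simp

theorem ChainHom.ext2 {P Q : ChainObj C} {f g : ChainHom P Q} (hα : ∀ i, f.α i = g.α i)
    (hθ : ∀ i, g.θ i = f.θ i ≫ eqToHom (congrArg Q.X.obj (hα i))) : f = g := by
  have hα' : f.α = g.α := OrderHom.ext _ _ (funext hα)
  refine ChainHom.ext' hα' ?_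
  obtain ⟨fα, fθ, fnat⟩ := f
  obtain ⟨gα, gθ, gnat⟩ := g
  simp only at hα'
  subst hα'
  refine heq_of_eq (funext fun i => ?_)
  rw [hθ i]; simp

theorem ChainHom.theta_eq {P Q : ChainObj C} {u v : ChainHom P Q} (h : u = v)
    (i : Fin (P.n + 1)) :
    ∃ e : u.α i = v.α i, v.θ i = u.θ i ≫ eqToHom (congrArg Q.X.obj e) := by
  subst h; exact ⟨rfl, by simp⟩

theorem ChainHom.theta_congr {P Q : ChainObj C} (u : ChainHom P Q)
    {i j : Fin (P.n + 1)} (h : i = j) :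
    u.θ i = eqToHom (congrArg P.X.obj h) ≫ u.θ j ≫
      eqToHom (congrArg (fun t => Q.X.obj (u.α t)) h).symm := by
  subst h; simp

theorem isIdMor_of_sigma_eq {x y : C} {u : x ⟶ y} {b : C} {v1 : x ⟶ b} {v2 : b ⟶ y}
    (h : (⟨x, 𝟙 x, u⟩ : Σ z : C, (x ⟶ z) × (z ⟶ y)) = ⟨b, v1, v2⟩) : IsIdMor v1 := by
  injection h with h1 h2
  subst h1
  have h3 : ((𝟙 x, u) : (x ⟶ x) × (x ⟶ y)) = (v1, v2) := eq_of_heq h2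
  injection h3 with h4 h5
  exact ⟨rfl, by rw [← h4]; simp⟩

variable {P Q : NegObj R} (f : P ⟶ Q)

/-- Key Reedy lemma: maps of `P` inside a fiber of `α` are identities. -/
theorem fiber_isId {i j : Fin (P.n + 1)} (hle : i ≤ j) (hα : f.1.α i = f.1.α j) :
    IsIdMor (P.X.map (homOfLE hle)) := by
  set u : P.X.obj i ⟶ Q.X.obj (f.1.α j) := P.X.map (homOfLE hle) ≫ f.1.θ j with hu
  have hnat : u = f.1.θ i ≫ Q.X.map (homOfLE (f.1.α.monotone hle)) := f.1.natural hle
  have hposu : R.pos u := by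
    rw [hnat, map_homOfLE_self Q.X _ hα]
    exact R.pos_comp _ _ (f.2 i) (pos_eqToHom R _)
  obtain ⟨t, ht, huniq⟩ := R.factor_existsUnique u
  have h1 := huniq ⟨P.X.obj i, 𝟙 _, u⟩ ⟨R.neg_id _, hposu, Category.id_comp u⟩
  have h2 := huniq ⟨P.X.obj j, P.X.map (homOfLE hle), f.1.θ j⟩ ⟨P.negMap hle, f.2 j, rfl⟩
  exact isIdMor_of_sigma_eq (h1.trans h2.symm)

def imgSet : Finset (Fin (Q.n + 1)) := Finset.image f.1.α Finset.univ

theorem imgSet_nonempty : (imgSet f).Nonempty :=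
  ⟨_, Finset.mem_image_of_mem _ (Finset.mem_univ 0)⟩

def midLen : ℕ := (imgSet f).card - 1

theorem card_imgSet : (imgSet f).card = midLen f + 1 :=
  (Nat.succ_pred_eq_of_pos (Finset.card_pos.2 (imgSet_nonempty f))).symm

noncomputable def delta0 : Fin (midLen f + 1) → Fin (Q.n + 1) :=
  ⇑((imgSet f).orderEmbOfFin (card_imgSet f))

theorem delta0_strictMono : StrictMono (delta0 f) :=
  ((imgSet f).orderEmbOfFin (card_imgSet f)).strictMono

theorem delta0_inj : Function.Injective (delta0 f) :=
  (delta0_strictMono f).injective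

theorem exists_delta0_eq (i : Fin (P.n + 1)) : ∃ k, delta0 f k = f.1.α i := by
  have hm : f.1.α i ∈ (imgSet f) := Finset.mem_image_of_mem _ (Finset.mem_univ i)
  erw [← Finset.mem_coe, ← Finset.range_orderEmbOfFin (imgSet f) (card_imgSet f)] at hm
  exact hm

noncomputable def sigma0 (i : Fin (P.n + 1)) : Fin (midLen f + 1) :=
  (exists_delta0_eq f i).choose

theorem delta0_sigma0 (i : Fin (P.n + 1)) : delta0 f (sigma0 f i) = f.1.α i :=
  (exists_delta0_eq f i).choose_spec

theorem sigma0_mono : Monotone (sigma0 f) := fun i j h =>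
  (delta0_strictMono f).le_iff_le.1
    (by rw [delta0_sigma0, delta0_sigma0]; exact f.1.α.monotone h)

theorem sigma0_surj : Function.Surjective (sigma0 f) := by
  intro k
  have hm : delta0 f k ∈ imgSet f := Finset.orderEmbOfFin_mem _ _ _
  obtain ⟨i, _, hi⟩ := Finset.mem_image.1 hm
  exact ⟨i, delta0_inj f (by erw [delta0_sigma0, hi])⟩

theorem fiber_nonempty (k : Fin (midLen f + 1)) :
    (Finset.univ.filter (fun i => sigma0 f i = k)).Nonempty := by
  obtain ⟨i, hi⟩ := sigma0_surj f k
  exact ⟨i, Finset.mem_filter.2 ⟨Finset.mem_univ i, hi⟩⟩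

noncomputable def sec (k : Fin (midLen f + 1)) : Fin (P.n + 1) :=
  (Finset.univ.filter (fun i => sigma0 f i = k)).min' (fiber_nonempty f k)

theorem sigma0_sec (k : Fin (midLen f + 1)) : sigma0 f (sec f k) = k :=
  (Finset.mem_filter.1 (Finset.min'_mem _ (fiber_nonempty f k))).2

theorem sec_le (i : Fin (P.n + 1)) : sec f (sigma0 f i) ≤ i := by
  unfold sec
  refine Finset.min'_le _ _ ?_
  exact Finset.mem_filter.2 ⟨Finset.mem_univ i, rfl⟩

theorem sec_mono : Monotone (sec f) := by
  intro k k' hkk'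
  by_contra hlt
  push_neg at hlt
  have h1 : sigma0 f (sec f k') ≤ sigma0 f (sec f k) := sigma0_mono f hlt.le
  rw [sigma0_sec, sigma0_sec] at h1
  have hk : k = k' := le_antisymm hkk' h1
  subst hk
  exact lt_irrefl _ hlt

theorem alpha_sec (k : Fin (midLen f + 1)) : f.1.α (sec f k) = delta0 f k := by
  rw [← delta0_sigma0, sigma0_sec]

theorem alpha_sec_sigma0 (i : Fin (P.n + 1)) : f.1.α (sec f (sigma0 f i)) = f.1.α i := by
  rw [alpha_sec, delta0_sigma0]

theorem sec_isId (i : Fin (P.n + 1)) : IsIdMor (P.X.map (homOfLE (sec_le f i))) :=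
  fiber_isId f (sec_le f i) (alpha_sec_sigma0 f i)

noncomputable def objEq (i : Fin (P.n + 1)) : P.X.obj (sec f (sigma0 f i)) = P.X.obj i :=
  (sec_isId f i).choose

theorem mapEq (i : Fin (P.n + 1)) :
    P.X.map (homOfLE (sec_le f i)) = eqToHom (objEq f i) :=
  (sec_isId f i).choose_spec

/-- The middle object of the factorization. -/
noncomputable def Mid : NegObj R where
  n := midLen f
  X := (sec_mono f).functor ⋙ P.X
  negMap h := P.negMap (sec_mono f h)

theorem Mid_map {k k' : Fin (midLen f + 1)} (h : k ≤ k') :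
    (Mid f).X.map (homOfLE h) = P.X.map (homOfLE (sec_mono f h)) := rfl

/-- The canonical `Γ₋`-morphism. -/
noncomputable def gCan : P ⟶ Mid f :=
  ⟨{ α := ⟨sigma0 f, sigma0_mono f⟩
     θ := fun i => eqToHom (objEq f i).symm
     natural := by
       intro i j hij
       show P.X.map (homOfLE hij) ≫ eqToHom (objEq f j).symm =
         eqToHom (objEq f i).symm ≫ P.X.map (homOfLE (sec_mono f (sigma0_mono f hij)))
       have h1 : P.X.map (homOfLE (sec_le f i)) ≫ P.X.map (homOfLE hij) =
           P.X.map (homOfLE (sec_mono f (sigma0_mono f hij))) ≫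
             P.X.map (homOfLE (sec_le f j)) := by
         erw [← Functor.map_comp, ← Functor.map_comp]
         exact congrArg P.X.map (Subsingleton.elim _ _)
       erw [mapEq, mapEq] at h1
       have h2 : P.X.map (homOfLE (sec_mono f (sigma0_mono f hij))) =
           eqToHom (objEq f i) ≫ P.X.map (homOfLE hij) ≫ eqToHom (objEq f j).symm := by
         rw [← Category.assoc, h1]; simp
       rw [h2]; simp },
   fun i => pos_eqToHom R (objEq f i).symm⟩

/-- The canonical `Γ₊`-morphism. -/
noncomputable def hCan : Mid f ⟶ Q :=
  ⟨{ α := ⟨delta0 f, (delta0_strictMono f).monotone⟩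
     θ := fun k => f.1.θ (sec f k) ≫ eqToHom (congrArg Q.X.obj (alpha_sec f k))
     natural := by
       intro k k' hkk'
       show P.chain.X.map (homOfLE (sec_mono f hkk')) ≫
           (f.1.θ (sec f k') ≫ eqToHom (congrArg Q.X.obj (alpha_sec f k'))) =
         (f.1.θ (sec f k) ≫ eqToHom (congrArg Q.X.obj (alpha_sec f k))) ≫
           Q.chain.X.map (homOfLE ((delta0_strictMono f).monotone hkk'))
       rw [← Category.assoc, f.1.natural (sec_mono f hkk'),
         map_homOfLE_congr Q.chain.X (f.1.α.monotone (sec_mono f hkk'))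
           ((delta0_strictMono f).monotone hkk') (alpha_sec f k) (alpha_sec f k')]
       simp
       erw [eqToHom_trans, eqToHom_refl, Category.comp_id]
       exact (Category.assoc _ _ _).symm },
   fun k => R.pos_comp _ _ (f.2 (sec f k)) (pos_eqToHom R _)⟩

theorem eqToHom_symm_cancel {a b y : C} (e : a = b) (g : b ⟶ y) :
    g = eqToHom e.symm ≫ eqToHom e ≫ g := by
  subst e; simp

theorem eqToHom_conj_conj {x y x' y' : C} (a : x = x') (b : y = y') (m : x' ⟶ y') :
    m = eqToHom a.symm ≫ (eqToHom a ≫ m ≫ eqToHom b.symm) ≫ eqToHom b := by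
  subst a; subst b; simp

theorem eqToHom_chain_eq {x0 x1 x2 y2 y1 y0 : C} (a : x0 = x1) (b : x1 = x2) (m : x2 ⟶ y2)
    (e2 : y2 = y1) (c : y1 = y0) (d : x0 = x2) (e : y2 = y0) :
    eqToHom a ≫ eqToHom b ≫ (m ≫ eqToHom e2) ≫ eqToHom c = eqToHom d ≫ m ≫ eqToHom e := by
  subst a; subst b; subst e2; subst c; simp

theorem gCan_comp_hCan : gCan f ≫ hCan f = f := by
  apply Subtype.ext
  show ChainHom.comp (gCan f).1 (hCan f).1 = f.1
  refine ChainHom.ext2 (fun i => delta0_sigma0 f i) (fun i => ?_)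
  show f.1.θ i = (eqToHom (objEq f i).symm ≫
      (f.1.θ (sec f (sigma0 f i)) ≫
        eqToHom (congrArg Q.X.obj (alpha_sec f (sigma0 f i))))) ≫
      eqToHom (congrArg Q.X.obj (delta0_sigma0 f i))
  have hnat : P.X.map (homOfLE (sec_le f i)) ≫ f.1.θ i =
      f.1.θ (sec f (sigma0 f i)) ≫ Q.X.map (homOfLE (f.1.α.monotone (sec_le f i))) :=
    f.1.natural (sec_le f i)
  erw [mapEq, map_homOfLE_self Q.X _ (alpha_sec_sigma0 f i)] at hnat
  erw [Category.assoc, Category.assoc, eqToHom_trans, ← hnat]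
  exact eqToHom_symm_cancel _ _

theorem conj_eq {a b a' b' : C} (p : a ⟶ b) (q : a' ⟶ b') (e1 : a = a') (e2 : b = b')
    (h : p ≫ eqToHom e2 = eqToHom e1 ≫ q) :
    q = eqToHom e1.symm ≫ p ≫ eqToHom e2 := by
  subst e1; subst e2; simpa using h.symm

theorem gCan_epi {Q' : NegObj R} (u v : Mid f ⟶ Q') (huv : gCan f ≫ u = gCan f ≫ v) :
    u = v := by
  apply Subtype.ext
  have hα : ∀ k, u.1.α k = v.1.α k := by
    intro k
    obtain ⟨i, hi⟩ := sigma0_surj f k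
    have h1 : u.1.α (sigma0 f i) = v.1.α (sigma0 f i) :=
      congrArg (fun w => w.1.α i) huv
    rw [← hi]; exact h1
  refine ChainHom.ext2 hα (fun k => ?_)
  obtain ⟨i, hi⟩ := sigma0_surj f k
  subst hi
  obtain ⟨e, he⟩ := ChainHom.theta_eq (congrArg Subtype.val huv) i
  have he2 : eqToHom (objEq f i).symm ≫ v.1.θ (sigma0 f i) =
      (eqToHom (objEq f i).symm ≫ u.1.θ (sigma0 f i)) ≫
        eqToHom (congrArg Q'.X.obj e) := he
  erw [Category.assoc] at he2
  have he3 := (cancel_epi (eqToHom (objEq f i).symm)).1 he2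
  exact he3

end Factorization

section Statements
set_option maxHeartbeats 1000000

variable (R : ReedyStruct C)

theorem statement9 {P Q : NegObj R} (f : P ⟶ Q) :
    ∃! t : Σ M : NegObj R, (P ⟶ M) × (M ⟶ Q),
      GammaNeg R t.2.1 ∧ GammaPos R t.2.2 ∧ t.2.1 ≫ t.2.2 = f := by
  refine ⟨⟨Mid f, gCan f, hCan f⟩,
    ⟨⟨sigma0_surj f, fun i => ⟨(objEq f i).symm, rfl⟩⟩, delta0_inj f, gCan_comp_hCan f⟩, ?_⟩
  rintro ⟨⟨n', X', nm'⟩, g', h'⟩ ⟨⟨hσs, hθid⟩, hδi, hcomp⟩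
  have hαcomp : ∀ i, h'.1.α (g'.1.α i) = f.1.α i :=
    fun i => congrArg (fun w => w.1.α i) hcomp
  -- the image of the injective part is the image of `α`
  have himg : Finset.image (fun k => h'.1.α k) Finset.univ = imgSet f := by
    apply Finset.ext
    intro x
    constructor
    · intro hx
      obtain ⟨k, -, hk⟩ := Finset.mem_image.1 hx
      obtain ⟨i, hi⟩ := hσs k
      refine Finset.mem_image.2 ⟨i, Finset.mem_univ i, ?_⟩
      rw [← hαcomp i, hi, hk]
    · intro hx
      obtain ⟨i, -, hi⟩ := Finset.mem_image.1 hx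
      exact Finset.mem_image.2 ⟨g'.1.α i, Finset.mem_univ _, by rw [hαcomp i, hi]⟩
  have hcard : midLen f + 1 = n' + 1 := by
    have h1 : (Finset.image (fun k => h'.1.α k) Finset.univ).card = n' + 1 := by
      rw [Finset.card_image_of_injective _ hδi, Finset.card_univ, Fintype.card_fin]
      rfl
    erw [himg, card_imgSet] at h1
    exact h1
  have e : n' = midLen f := (Nat.succ_injective hcard).symm
  subst e
  -- the injective part agrees with `delta0`
  have hδmem : ∀ k, h'.1.α k ∈ imgSet f := fun k => by
    rw [← himg]; exact Finset.mem_image_of_mem _ (Finset.mem_univ k)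
  have hδsm : StrictMono (fun k => h'.1.α k) :=
    h'.1.α.monotone.strictMono_of_injective hδi
  have hδeq : ∀ k, h'.1.α k = delta0 f k := fun k =>
    congrFun (Finset.orderEmbOfFin_unique (card_imgSet f) hδmem hδsm) k
  -- the surjective part agrees with `sigma0`
  have hσeq : ∀ i, g'.1.α i = sigma0 f i := fun i =>
    delta0_inj f (by erw [← hδeq (g'.1.α i), hαcomp i, delta0_sigma0])
  have hsk : ∀ k, g'.1.α (sec f k) = k := fun k => by erw [hσeq, sigma0_sec]
  -- the middle functor agrees with that of `Mid f`
  have hobj : ∀ k, X'.obj k = P.X.obj (sec f k) := by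
    intro k
    obtain ⟨e1, -⟩ := hθid (sec f k)
    have e1' : P.X.obj (sec f k) = X'.obj (g'.1.α (sec f k)) := e1
    rw [hsk k] at e1'
    exact e1'.symm
  have hXeq : X' = (Mid f).X := by
    refine CategoryTheory.Functor.ext hobj (fun k k' u => ?_)
    rw [show u = homOfLE (leOfHom u) from (homOfLE_leOfHom u).symm]
    have hkk' : k ≤ k' := leOfHom u
    obtain ⟨e1, he1⟩ := hθid (sec f k)
    obtain ⟨e2, he2⟩ := hθid (sec f k')
    have hnat : P.X.map (homOfLE (sec_mono f hkk')) ≫ g'.1.θ (sec f k') =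
        g'.1.θ (sec f k) ≫ X'.map (homOfLE (g'.1.α.monotone (sec_mono f hkk'))) :=
      g'.1.natural (sec_mono f hkk')
    rw [he1, he2, map_homOfLE_congr X' (g'.1.α.monotone (sec_mono f hkk')) hkk'
      (hsk k) (hsk k')] at hnat
    have hq := conj_eq (P.X.map (homOfLE (sec_mono f hkk')))
      (eqToHom (congrArg X'.obj (hsk k)) ≫ X'.map (homOfLE hkk') ≫
        eqToHom (congrArg X'.obj (hsk k')).symm)
      (e1 : P.X.obj (sec f k) = X'.obj (g'.1.α (sec f k)))
      (e2 : P.X.obj (sec f k') = X'.obj (g'.1.α (sec f k'))) hnat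
    have hX : X'.map (homOfLE hkk') =
        eqToHom (congrArg X'.obj (hsk k)).symm ≫ (eqToHom e1.symm ≫
          P.X.map (homOfLE (sec_mono f hkk')) ≫ eqToHom e2) ≫
          eqToHom (congrArg X'.obj (hsk k')) := by
      erw [← hq]; exact eqToHom_conj_conj _ _ _
    rw [hX]
    show _ = eqToHom (hobj k) ≫ P.X.map (homOfLE (sec_mono f hkk')) ≫
      eqToHom (hobj k').symm
    simp only [← Category.assoc, eqToHom_trans]
    simp only [Category.assoc, eqToHom_trans]
    exact eqToHom_chain_eq _ _ _ _ _ _ _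
  subst hXeq
  have hg : g' = gCan f := by
    apply Subtype.ext
    refine ChainHom.ext2 (fun i => hσeq i) (fun i => ?_)
    obtain ⟨e1, he1⟩ := hθid i
    rw [he1, eqToHom_trans]
    rfl
  rw [hg] at hcomp
  have hh : h' = hCan f := gCan_epi f h' (hCan f) (hcomp.trans (gCan_comp_hCan f).symm)
  rw [hg, hh]
  rfl

end Statements

end ReedyPaper
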